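/- Inner products supercommute: for vector fields V, W : Fin n → Λ on ℝ^{0|n} of Grassmann parities p and q respectively (i.e. all components V α lie in the evenOdd (p+1) part and all W α in the evenOdd (q+1) part of Λ), one has V_↑ ∘ W_↑ = (-1)^((p+1)(q+1)) · W_↑ ∘ V_↑ as linear endomorphisms of P; equivalently the supercommutator [V_↑, W_↑] vanishes. -/

import Mathlib

open TensorProduct

noncomputable section

/-- The Grassmann algebra on `n` odd generators `ξ^α`. -/
abbrev Lam (n : ℕ) : Type := ExteriorAlgebra ℝ (Fin n → ℝ)

/-- The odd coordinate `ξ^α`, i.e. the generator `e_α = ι (Pi.single α 1)`. -/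
def gen {n : ℕ} (α : Fin n) : Lam n := ExteriorAlgebra.ι ℝ (Pi.single α 1)

/-- The odd partial derivative `∂/∂ξ^α`: left contraction with the `α`-th
coordinate functional, the unique antiderivation sending `e_β` to `δ_{αβ}`. -/
def pd {n : ℕ} (α : Fin n) : Lam n →ₗ[ℝ] Lam n :=
  CliffordAlgebra.contractLeft (Q := (0 : QuadraticForm ℝ (Fin n → ℝ))) (LinearMap.proj α)

/-- The algebra of (pseudo)differential forms on `ℝ^{0|n}`:
polynomials in the even fiber coordinates `y^α` with Grassmann coefficients. -/
abbrev Forms (n : ℕ) : Type := MvPolynomial (Fin n) ℝ ⊗[ℝ] Lam n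

/-- The de Rham differential `Q = y^α ∂_{ξ^α}`. -/
def deRham (n : ℕ) : Forms n →ₗ[ℝ] Forms n :=
  ∑ α : Fin n, TensorProduct.map (LinearMap.mulLeft ℝ (MvPolynomial.X α)) (pd α)


/-- The inner product `i_V = V^α ∂_{y^α}` of the vector field `V = V^α ∂_{ξ^α}`. -/
def innerProd {n : ℕ} (V : Fin n → Lam n) : Forms n →ₗ[ℝ] Forms n :=
  ∑ α : Fin n, TensorProduct.map (MvPolynomial.pderiv α).toLinearMap
    (LinearMap.mulLeft ℝ (V α))

lemma neg_one_pow_congr' {i k : ℕ} (h : (i : ZMod 2) = (k : ZMod 2)) :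
    ((-1 : ℝ) ^ i) = (-1 : ℝ) ^ k := by
  rw [neg_one_pow_eq_pow_mod_two, neg_one_pow_eq_pow_mod_two (n := k)]
  have : i % 2 = k % 2 := by
    have := (ZMod.natCast_eq_natCast_iff i k 2).mp h
    simpa [Nat.ModEq] using this
  rw [this]

open CliffordAlgebra in
lemma ι_comm_pow {n : ℕ} (v : Fin n → ℝ) (k : ℕ) (b : Lam n)
    (hb : b ∈ (LinearMap.range (ι (0 : QuadraticForm ℝ (Fin n → ℝ)))) ^ k) :
    ι (0 : QuadraticForm ℝ (Fin n → ℝ)) v * b = (-1 : ℝ) ^ k • (b * ι 0 v) := by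
  induction hb using Submodule.pow_induction_on_left' with
  | algebraMap r => simp [Algebra.commutes]
  | add x y i hx hy ihx ihy => simp [mul_add, add_mul, ihx, ihy, smul_add]
  | mem_mul m hm i x hx ih =>
    obtain ⟨w, rfl⟩ := hm
    have horth : (0 : QuadraticForm ℝ (Fin n → ℝ)).IsOrtho v w := by
      simp [QuadraticMap.IsOrtho]
    rw [← mul_assoc, ι_mul_ι_comm_of_isOrtho horth, neg_mul, mul_assoc, ih,
      pow_succ]
    simp [mul_smul_comm, smul_smul, mul_assoc]

open CliffordAlgebra in
lemma ι_comm_evenOdd {n : ℕ} (v : Fin n → ℝ) (j : ZMod 2) (b : Lam n)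
    (hb : b ∈ evenOdd (0 : QuadraticForm ℝ (Fin n → ℝ)) j) :
    ι (0 : QuadraticForm ℝ (Fin n → ℝ)) v * b = (-1 : ℝ) ^ j.val • (b * ι 0 v) := by
  refine Submodule.iSup_induction' _
    (motive := fun b _ => ι (0 : QuadraticForm ℝ (Fin n → ℝ)) v * b
        = (-1 : ℝ) ^ j.val • (b * ι 0 v))
    (fun i x hx => ?_) (by simp) (fun x y _ _ ihx ihy => ?_) hb
  · beta_reduce
    have hc : (-1 : ℝ) ^ (i.1) = (-1 : ℝ) ^ j.val :=
      neg_one_pow_congr' (by rw [ZMod.natCast_zmod_val]; exact i.2)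
    rw [ι_comm_pow v i.1 x hx, hc]
  · beta_reduce
    beta_reduce at ihx ihy
    simp [mul_add, add_mul, ihx, ihy, smul_add]

open CliffordAlgebra in
lemma pow_comm_evenOdd {n : ℕ} (k : ℕ) (j : ZMod 2) (a b : Lam n)
    (ha : a ∈ (LinearMap.range (ι (0 : QuadraticForm ℝ (Fin n → ℝ)))) ^ k)
    (hb : b ∈ evenOdd (0 : QuadraticForm ℝ (Fin n → ℝ)) j) :
    a * b = (-1 : ℝ) ^ (k * j.val) • (b * a) := by
  induction ha using Submodule.pow_induction_on_left' with
  | algebraMap r => simp [Algebra.commutes]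
  | add x y i hx hy ihx ihy => simp [mul_add, add_mul, ihx, ihy, smul_add]
  | mem_mul m hm i x hx ih =>
    obtain ⟨w, rfl⟩ := hm
    rw [mul_assoc, ih, mul_smul_comm, ← mul_assoc, ι_comm_evenOdd w j b hb,
      smul_mul_assoc, smul_smul, ← pow_add, mul_assoc, Nat.succ_eq_add_one]
    congr 2
    ring

open CliffordAlgebra in
lemma evenOdd_supercomm {n : ℕ} (i j : ZMod 2) (a b : Lam n)
    (ha : a ∈ evenOdd (0 : QuadraticForm ℝ (Fin n → ℝ)) i)
    (hb : b ∈ evenOdd (0 : QuadraticForm ℝ (Fin n → ℝ)) j) :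
    a * b = (-1 : ℝ) ^ (i * j).val • (b * a) := by
  refine Submodule.iSup_induction' _
    (motive := fun a _ => a * b = (-1 : ℝ) ^ (i * j).val • (b * a))
    (fun k x hx => ?_) (by simp) (fun x y _ _ ihx ihy => ?_) ha
  · beta_reduce
    rw [pow_comm_evenOdd k.1 j x b hx hb]
    congr 1
    refine neg_one_pow_congr' ?_
    push_cast
    rw [k.2, ZMod.natCast_zmod_val, ZMod.natCast_zmod_val]
  · beta_reduce
    beta_reduce at ihx ihy
    simp [mul_add, add_mul, ihx, ihy, smul_add]

lemma sum_comp' {R M N P : Type*} [CommSemiring R] [AddCommMonoid M] [AddCommMonoid N]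
    [AddCommMonoid P] [Module R M] [Module R N] [Module R P] {ι : Type*} (s : Finset ι)
    (f : ι → (N →ₗ[R] P)) (g : M →ₗ[R] N) :
    (∑ i ∈ s, f i) ∘ₗ g = ∑ i ∈ s, (f i ∘ₗ g) :=
  LinearMap.ext fun x => by simp [LinearMap.sum_apply]

lemma comp_sum' {R M N P : Type*} [CommSemiring R] [AddCommMonoid M] [AddCommMonoid N]
    [AddCommMonoid P] [Module R M] [Module R N] [Module R P] {ι : Type*} (s : Finset ι)
    (g : N →ₗ[R] P) (f : ι → (M →ₗ[R] N)) :
    g ∘ₗ (∑ i ∈ s, f i) = ∑ i ∈ s, (g ∘ₗ f i) :=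
  LinearMap.ext fun x => by simp [LinearMap.sum_apply, map_sum]

lemma pderiv_pderiv {n : ℕ} (α β : Fin n) (f : MvPolynomial (Fin n) ℝ) :
    MvPolynomial.pderiv α (MvPolynomial.pderiv β f)
      = MvPolynomial.pderiv β (MvPolynomial.pderiv α f) := by
  induction f using MvPolynomial.induction_on with
  | C a => simp
  | add f g hf hg => simp [hf, hg]
  | mul_X f i hf =>
    have h2 : ∀ γ δ : Fin n, (MvPolynomial.pderiv (R := ℝ) γ)
        ((MvPolynomial.pderiv δ) (MvPolynomial.X i)) = 0 := by
      intro γ δ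
      rw [MvPolynomial.pderiv_X]
      rcases eq_or_ne δ i with h | h <;> simp [Pi.single_apply, h]
    simp only [MvPolynomial.pderiv_mul, map_add, hf, h2]
    ring

/-- Inner products supercommute: for vector fields `V, W` of Grassmann parities `p, q`
(components of element parities `p+1, q+1`),
`V_↑ ∘ W_↑ = (-1)^((p+1)(q+1)) W_↑ ∘ V_↑`, i.e. the supercommutator `[V_↑, W_↑]` vanishes. -/
theorem innerProd_supercomm (n : ℕ) (hn : 1 ≤ n) (p q : ZMod 2) (V W : Fin n → Lam n)
    (hV : ∀ α, V α ∈ CliffordAlgebra.evenOdd (0 : QuadraticForm ℝ (Fin n → ℝ)) (p + 1))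
    (hW : ∀ α, W α ∈ CliffordAlgebra.evenOdd (0 : QuadraticForm ℝ (Fin n → ℝ)) (q + 1)) :
    innerProd V ∘ₗ innerProd W =
      (-1 : ℝ) ^ ((p + 1) * (q + 1)).val • (innerProd W ∘ₗ innerProd V) := by
  unfold innerProd
  simp_rw [sum_comp', comp_sum', ← TensorProduct.map_comp, Finset.smul_sum]
  rw [Finset.sum_comm]
  refine Finset.sum_congr rfl fun β _ => ?_
  refine Finset.sum_congr rfl fun α _ => ?_
  have hD : (MvPolynomial.pderiv (R := ℝ) α).toLinearMap ∘ₗ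
      (MvPolynomial.pderiv β).toLinearMap =
      (MvPolynomial.pderiv (R := ℝ) β).toLinearMap ∘ₗ
      (MvPolynomial.pderiv α).toLinearMap :=
    LinearMap.ext fun f => pderiv_pderiv α β f
  have hL : LinearMap.mulLeft ℝ (V α) ∘ₗ LinearMap.mulLeft ℝ (W β)
      = (-1 : ℝ) ^ ((p + 1) * (q + 1)).val •
        (LinearMap.mulLeft ℝ (W β) ∘ₗ LinearMap.mulLeft ℝ (V α)) := by
    rw [← LinearMap.mulLeft_mul, ← LinearMap.mulLeft_mul]
    refine LinearMap.ext fun x => ?_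
    rw [LinearMap.smul_apply, LinearMap.mulLeft_apply, LinearMap.mulLeft_apply,
      evenOdd_supercomm (p + 1) (q + 1) (V α) (W β) (hV α) (hW β), smul_mul_assoc]
  rw [hD, hL, TensorProduct.map_smul_right]
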